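/- Let b, c ≥ 0 be real numbers, let T ≥ 1, let a_1, …, a_T be nonnegative real numbers, and let δ_0, δ_1, …, δ_T be nonnegative real numbers with δ_0 = 0 such that for every t ∈ {1, …, T}: δ_t ≤ δ_{t−1} + b a_t and δ_{t−1}(δ_t − δ_{t−1}) ≤ c a_t² (equivalently, δ_t ≤ δ_{t−1} + min{b a_t, c a_t²/δ_{t−1}} with the convention that the second term is +∞ when δ_{t−1} = 0). Then δ_T ≤ √((b² + 2c) Σ_{t=1}^T a_t²). -/
import Mathlib


open Finset

/-- If δ_0 = 0 and for every t ∈ {1, …, T}, δ_t ≤ δ_{t−1} + b a_t and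
δ_{t−1}(δ_t − δ_{t−1}) ≤ c a_t², with all quantities nonnegative, then
δ_T ≤ √((b² + 2c) Σ_{t=1}^T a_t²). -/
theorem recursion_bound (b c : ℝ) (hb : 0 ≤ b) (hc : 0 ≤ c) (T : ℕ) (hT : 1 ≤ T)
    (a : ℕ → ℝ) (ha : ∀ t ∈ Finset.Icc 1 T, 0 ≤ a t)
    (δ : ℕ → ℝ) (hδ0 : δ 0 = 0) (hδnn : ∀ t ≤ T, 0 ≤ δ t)
    (h1 : ∀ t ∈ Finset.Icc 1 T, δ t ≤ δ (t - 1) + b * a t)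
    (h2 : ∀ t ∈ Finset.Icc 1 T, δ (t - 1) * (δ t - δ (t - 1)) ≤ c * a t ^ 2) :
    δ T ≤ Real.sqrt ((b ^ 2 + 2 * c) * ∑ t ∈ Finset.Icc 1 T, a t ^ 2) := by
  have key : ∀ t, t ≤ T → δ t ^ 2 ≤ (b ^ 2 + 2 * c) * ∑ s ∈ Finset.Icc 1 t, a s ^ 2 := by
    intro t
    induction t with
    | zero => intro _; simp [hδ0]
    | succ n ih =>
      intro hn
      have hnT : n ≤ T := Nat.le_of_succ_le hn
      have hmem : n + 1 ∈ Finset.Icc 1 T := by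
        simp [Nat.succ_le_iff]; omega
      have hIH := ih hnT
      have h1' := h1 _ hmem
      have h2' := h2 _ hmem
      simp only [Nat.add_sub_cancel] at h1' h2'
      have hsum : ∑ s ∈ Finset.Icc 1 (n + 1), a s ^ 2
          = (∑ s ∈ Finset.Icc 1 n, a s ^ 2) + a (n + 1) ^ 2 := by
        rw [Finset.sum_Icc_succ_top (by omega)]
      rw [hsum, mul_add]
      by_cases hcase : δ (n + 1) ≤ δ n
      · have : δ (n + 1) ^ 2 ≤ δ n ^ 2 :=
          pow_le_pow_left₀ (hδnn _ (by omega)) hcase 2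
        have hnn : 0 ≤ (b ^ 2 + 2 * c) * a (n + 1) ^ 2 := by positivity
        nlinarith
      · push_neg at hcase
        have hd : 0 ≤ δ (n + 1) - δ n := by linarith
        have hdb : δ (n + 1) - δ n ≤ b * a (n + 1) := by linarith
        have hsq : (δ (n + 1) - δ n) ^ 2 ≤ b ^ 2 * a (n + 1) ^ 2 := by
          have := mul_self_le_mul_self hd hdb
          nlinarith
        have expand : δ (n + 1) ^ 2
            = δ n ^ 2 + 2 * (δ n * (δ (n + 1) - δ n)) + (δ (n + 1) - δ n) ^ 2 := by
          ring
        nlinarith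
  have hrhs : 0 ≤ (b ^ 2 + 2 * c) * ∑ t ∈ Finset.Icc 1 T, a t ^ 2 :=
    mul_nonneg (by positivity) (Finset.sum_nonneg fun i _ => sq_nonneg _)
  exact (Real.le_sqrt (hδnn T le_rfl) hrhs).mpr (key T le_rfl)
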